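/- Let P be a Markov kernel on a measurable space E satisfying, for some α > 1 and a symmetric measurable function Φ: E×E → [0,∞), the Harnack inequality (Pf)^α(x) ≤ exp(Φ(x,y)) · P f^α(y) for all bounded nonnegative measurable f and all x, y ∈ E. If μ is an invariant probability measure for P and there is x₀ ∈ E and a measurable set B ∋ x₀ with μ(B) = 0 and ∫ exp(−Φ(x₀,y)) μ(dy) > 0, then P(x₀, B) = 0. -/

import Mathlib

open MeasureTheory ProbabilityTheory

theorem harnack_full_support {E : Type*} [MeasurableSpace E]
    (P : Kernel E E) [IsMarkovKernel P] (μ : Measure E) [IsProbabilityMeasure μ]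
    (α : ℝ) (hα : 1 < α) (Φ : E → E → ℝ)
    (hΦmeas : Measurable (Function.uncurry Φ)) (hΦnn : ∀ x y, 0 ≤ Φ x y)
    (hΦsymm : ∀ x y, Φ x y = Φ y x)
    (hHarnack : ∀ f : E → ℝ, Measurable f → (∀ z, 0 ≤ f z) →
      (∃ M, ∀ z, f z ≤ M) → ∀ x y,
      (∫ z, f z ∂(P x)) ^ α ≤ Real.exp (Φ x y) * ∫ z, (f z) ^ α ∂(P y))
    (hinv : ∀ s : Set E, MeasurableSet s → ∫⁻ x, P x s ∂μ = μ s)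
    (x₀ : E) (B : Set E) (hB : MeasurableSet B) (hx₀ : x₀ ∈ B) (hμB : μ B = 0)
    (hpos : 0 < ∫ y, Real.exp (-Φ x₀ y) ∂μ) :
    P x₀ B = 0 := by
  -- From invariance, ∫⁻ y, P y B dμ = μ B = 0, hence P y B = 0 for μ-a.e. y.
  have hint : ∫⁻ x, P x B ∂μ = 0 := by rw [hinv B hB, hμB]
  have hae : ∀ᵐ y ∂μ, P y B = 0 := by
    have := (lintegral_eq_zero_iff (Kernel.measurable_coe P hB)).mp hint
    filter_upwards [this] with y hy using hy
  -- Since μ is a probability measure, there exists y with P y B = 0.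
  obtain ⟨y, hy⟩ : ∃ y, P y B = 0 := by
    by_contra h
    push_neg at h
    have : (∀ᵐ y ∂μ, False) := by filter_upwards [hae] with y hy using h y hy
    have h0 : μ Set.univ = 0 := by simpa using ae_iff.mp this
    simp at h0
  -- Apply Harnack with f = indicator of B.
  set f : E → ℝ := B.indicator 1 with hf
  have hfmeas : Measurable f := measurable_one.indicator hB
  have hfnn : ∀ z, 0 ≤ f z := fun z => Set.indicator_nonneg (fun _ _ => zero_le_one) z
  have hfbd : ∃ M, ∀ z, f z ≤ M := ⟨1, fun z => Set.indicator_le_self' (fun _ _ => zero_le_one) z⟩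
  have hfpow : ∀ z, f z ^ α = f z := by
    intro z
    by_cases hz : z ∈ B <;>
      simp [hf, hz, Real.zero_rpow (by linarith : α ≠ 0)]
  have hint1 : ∀ ν : Measure E, [IsFiniteMeasure ν] → ∫ z, f z ∂ν = (ν B).toReal := by
    intro ν _
    exact integral_indicator_one (μ := ν) hB
  have key := hHarnack f hfmeas hfnn hfbd x₀ y
  rw [show (fun z => f z ^ α) = f from funext hfpow] at key
  have h1 : ∫ z, f z ∂(P x₀) = (P x₀ B).toReal := hint1 (P x₀)
  have h2 : ∫ z, f z ∂(P y) = (P y B).toReal := hint1 (P y)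
  rw [h1, h2, hy] at key
  simp only [ENNReal.toReal_zero, mul_zero] at key
  -- So (P x₀ B).toReal ^ α ≤ 0, forcing (P x₀ B).toReal = 0.
  have hnn : 0 ≤ (P x₀ B).toReal := ENNReal.toReal_nonneg
  have hzero : (P x₀ B).toReal = 0 := by
    by_contra hne
    have hpos' : 0 < (P x₀ B).toReal := lt_of_le_of_ne hnn (Ne.symm hne)
    have := Real.rpow_pos_of_pos hpos' α
    linarith
  have hfin : P x₀ B ≠ ⊤ := (measure_ne_top (P x₀) B)
  exact (ENNReal.toReal_eq_zero_iff _).mp hzero |>.resolve_right hfin
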